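/- Let K ≥ 2 be an integer and let R > 1 and ζ > 1 be reals. Set η_H := 1/(R^K + R^{-K}), a := ζR + ζ⁻¹R⁻¹, b := R + R⁻¹, and define F : ℝ → ℝ by F(ω) := ((2cos ω − a)/(2cos ω − b))·(1 − 2η_H cos(Kω)). If K² < (1/η_H)·((a − b)(1 − 2η_H))/((a − 2cos(π/K))·(b − 2cos(π/K))), then the supremum of F over [0, 2π) equals ((a − 2)/(b − 2))·(1 − 2η_H), and this value is attained at ω = 0. -/
import Mathlib

open Real

-- helper: |sin (n x)| ≤ n |sin x|
lemma abs_sin_nat_mul_le' (n : ℕ) (x : ℝ) : |Real.sin (n * x)| ≤ n * |Real.sin x| := by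
  induction n with
  | zero => simp
  | succ n ih =>
    have h : ((n:ℝ)+1) * x = n * x + x := by ring
    push_cast
    rw [h, Real.sin_add]
    calc |Real.sin (n*x) * Real.cos x + Real.cos (n*x) * Real.sin x|
        ≤ |Real.sin (n*x) * Real.cos x| + |Real.cos (n*x) * Real.sin x| := abs_add_le _ _
      _ ≤ |Real.sin (n*x)| * 1 + 1 * |Real.sin x| := by
          rw [abs_mul, abs_mul]
          gcongr
          · exact Real.abs_cos_le_one x
          · exact Real.abs_cos_le_one _
      _ ≤ (n:ℝ) * |Real.sin x| + 1 * |Real.sin x| := by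
          rw [mul_one]
          have := ih
          nlinarith [abs_nonneg (Real.sin x)]
      _ = ((n:ℝ)+1) * |Real.sin x| := by ring

lemma one_sub_cos_nat_mul_le (n : ℕ) (x : ℝ) :
    1 - Real.cos (n * x) ≤ (n:ℝ)^2 * (1 - Real.cos x) := by
  have hsq : ∀ y : ℝ, Real.sin y ^ 2 = 1/2 - Real.cos (2*y) / 2 := by
    intro y
    have h1 := Real.cos_sq y
    have h2 := Real.sin_sq_add_cos_sq y
    nlinarith
  have h1 := hsq (n * (x/2))
  have h2 := hsq (x/2)
  have e1 : 2 * ((n:ℝ) * (x/2)) = n * x := by ring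
  have e2 : 2 * (x/2) = x := by ring
  rw [e1] at h1; rw [e2] at h2
  have h3 := abs_sin_nat_mul_le' n (x/2)
  have h4 : Real.sin ((n:ℝ) * (x/2)) ^ 2 ≤ ((n:ℝ) * |Real.sin (x/2)|)^2 := by
    have := abs_nonneg (Real.sin ((n:ℝ) * (x/2)))
    calc Real.sin ((n:ℝ) * (x/2)) ^ 2 = |Real.sin ((n:ℝ)*(x/2))|^2 := (sq_abs _).symm
      _ ≤ ((n:ℝ) * |Real.sin (x/2)|)^2 := by
          apply pow_le_pow_left₀ (abs_nonneg _) h3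
  have h5 : ((n:ℝ) * |Real.sin (x/2)|)^2 = (n:ℝ)^2 * Real.sin (x/2)^2 := by
    rw [mul_pow, sq_abs]
  nlinarith [h4]



set_option maxHeartbeats 1000000 in
/-- PAPR formula (Eq. (35)): under the sufficient condition of Proposition 1,
the supremum of `F` over `[0, 2π)` equals `((a − 2)/(b − 2))·(1 − 2η_H)`,
and this value is attained at `ω = 0`. -/
theorem stmt_1 (K : ℕ) (hK : 2 ≤ K) (R ζ : ℝ) (hR : 1 < R) (hζ : 1 < ζ)
    (ηH a b : ℝ)
    (hηH : ηH = 1 / (R ^ K + R⁻¹ ^ K))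
    (ha : a = ζ * R + ζ⁻¹ * R⁻¹)
    (hb : b = R + R⁻¹)
    (F : ℝ → ℝ)
    (hF : ∀ ω : ℝ, F ω =
      ((2 * Real.cos ω - a) / (2 * Real.cos ω - b)) * (1 - 2 * ηH * Real.cos (K * ω)))
    (hcond : (K : ℝ) ^ 2 <
      (1 / ηH) * ((a - b) * (1 - 2 * ηH)) /
        ((a - 2 * Real.cos (π / K)) * (b - 2 * Real.cos (π / K)))) :
    sSup (F '' Set.Ico (0 : ℝ) (2 * π)) = ((a - 2) / (b - 2)) * (1 - 2 * ηH) ∧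
      F 0 = ((a - 2) / (b - 2)) * (1 - 2 * ηH) := by
  have hRpos : (0:ℝ) < R := lt_trans one_pos hR
  have hζpos : (0:ℝ) < ζ := lt_trans one_pos hζ
  have hK2 : (2:ℝ) ≤ (K:ℝ) := by exact_mod_cast hK
  have hKpos : (0:ℝ) < (K:ℝ) := by linarith
  -- b > 2
  have hb2 : 2 < b := by
    rw [hb]
    have h := mul_inv_cancel₀ (ne_of_gt hRpos)
    nlinarith [sq_nonneg (R - 1)]
  -- a > b
  have hab : b < a := by
    have key : a - b = (ζ - 1) * (ζ * R^2 - 1) / (ζ * R) := by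
      rw [ha, hb]; field_simp; ring
    have hpos : 0 < (ζ - 1) * (ζ * R^2 - 1) / (ζ * R) := by
      apply div_pos
      · apply mul_pos (by linarith)
        nlinarith
      · positivity
    linarith
  -- η bounds
  have hRK : 1 < R ^ K := one_lt_pow₀ hR (by omega)
  have hRKi : 0 < R⁻¹ ^ K := pow_pos (inv_pos.mpr hRpos) K
  have hSinv : R⁻¹ ^ K = (R ^ K)⁻¹ := by rw [inv_pow]
  have hS2 : 2 < R ^ K + R⁻¹ ^ K := by
    rw [hSinv]
    have h := mul_inv_cancel₀ (ne_of_gt (lt_trans one_pos hRK))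
    nlinarith [sq_nonneg (R ^ K - 1)]
  have hηpos : 0 < ηH := by
    rw [hηH]; positivity
  have hηhalf : ηH < 1/2 := by
    rw [hηH]
    rw [div_lt_div_iff₀ (by linarith) (by norm_num)]
    linarith
  have h12η : 0 < 1 - 2 * ηH := by linarith
  set c₀ : ℝ := Real.cos (π / K) with hc₀def
  have hπ : 0 < π := Real.pi_pos
  have hπK : 0 < π / K := by positivity
  have hπK2 : π / K ≤ π / 2 := by
    apply div_le_div_of_nonneg_left hπ.le (by norm_num) hK2
  have hc₀le1 : c₀ ≤ 1 := Real.cos_le_one _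
  -- Jordan-type: 1 - c₀ ≥ 2 / K²
  have hJordan : 2 ≤ (K:ℝ)^2 * (1 - c₀) := by
    have h := Real.cos_le_one_sub_mul_cos_sq (x := π / K)
      (by rw [abs_of_pos hπK]; exact div_le_self hπ.le (by linarith))
    have hπ2 : (π:ℝ)^2 > 0 := by positivity
    have he : 2 / π ^ 2 * (π / K)^2 = 2 / (K:ℝ)^2 := by
      field_simp
    rw [he] at h
    have hK2pos : (0:ℝ) < (K:ℝ)^2 := by positivity
    have h2 : 2 / (K:ℝ)^2 ≤ 1 - c₀ := by rw [hc₀def]; linarith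
    calc (2:ℝ) = (K:ℝ)^2 * (2 / (K:ℝ)^2) := by field_simp
      _ ≤ (K:ℝ)^2 * (1 - c₀) := mul_le_mul_of_nonneg_left h2 hK2pos.le
  have hc₀lt1 : c₀ < 1 := by nlinarith
  have hac₀ : 0 < a - 2 * c₀ := by linarith
  have hbc₀ : 0 < b - 2 * c₀ := by linarith
  have hD : 0 < (a - 2 * c₀) * (b - 2 * c₀) := mul_pos hac₀ hbc₀
  -- rearranged condition
  have hcond' : ηH * ((K:ℝ)^2 * ((a - 2*c₀) * (b - 2*c₀))) < (a - b) * (1 - 2*ηH) := by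
    have h1 : (K:ℝ)^2 * ((a - 2*c₀) * (b - 2*c₀)) < 1 / ηH * ((a - b) * (1 - 2 * ηH)) :=
      (lt_div_iff₀ hD).mp hcond
    have h2 := mul_lt_mul_of_pos_left h1 hηpos
    have h3 : ηH * (1 / ηH * ((a - b) * (1 - 2 * ηH))) = (a - b) * (1 - 2 * ηH) := by
      field_simp
    linarith
  -- value at 0
  have hF0 : F 0 = ((a - 2) / (b - 2)) * (1 - 2 * ηH) := by
    rw [hF 0]
    norm_num
    rw [show (2:ℝ) - a = -(a-2) by ring, show (2:ℝ) - b = -(b-2) by ring, neg_div_neg_eq]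
    exact Or.inl rfl
  -- pointwise bound
  have key : ∀ ω : ℝ, F ω ≤ F 0 := by
    intro ω
    have hc1 : Real.cos ω ≤ 1 := Real.cos_le_one ω
    have hcm : -1 ≤ Real.cos ω := Real.neg_one_le_cos ω
    have hd1 : Real.cos ((K:ℝ) * ω) ≤ 1 := Real.cos_le_one _
    have hdm : -1 ≤ Real.cos ((K:ℝ) * ω) := Real.neg_one_le_cos _
    set c := Real.cos ω with hc
    set d := Real.cos ((K:ℝ) * ω) with hd
    have hKd : 1 - d ≤ (K:ℝ)^2 * (1 - c) := one_sub_cos_nat_mul_le K ω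
    have hbc : 0 < b - 2 * c := by linarith
    have hac : 0 < a - 2 * c := by linarith
    rw [hF ω, hF0]
    have hrw : (2 * c - a) / (2 * c - b) = (a - 2*c) / (b - 2*c) := by
      rw [show 2*c - a = -(a - 2*c) by ring, show 2*c - b = -(b - 2*c) by ring, neg_div_neg_eq]
    rw [hrw, div_mul_eq_mul_div, div_mul_eq_mul_div, div_le_div_iff₀ hbc (by linarith)]
    suffices hsuf : 2*ηH*(1-d)*((a-2*c)*(b-2)) ≤ 2*(1-2*ηH)*((a-b)*(1-c)) by
      have hgoal : (a-2)*(1-2*ηH)*(b-2*c) - (a-2*c)*(1-2*ηH*d)*(b-2)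
          = 2*(1-2*ηH)*((a-b)*(1-c)) - 2*ηH*(1-d)*((a-2*c)*(b-2)) := by ring
      linarith [hsuf, hgoal]
    by_cases hcase : c₀ ≤ c
    · have hnn : (0:ℝ) ≤ (a-2*c)*(b-2) := mul_nonneg (by linarith) (by linarith)
      have hA1 : (1-d)*((a-2*c)*(b-2)) ≤ ((K:ℝ)^2*(1-c))*((a-2*c)*(b-2)) :=
        mul_le_mul_of_nonneg_right hKd hnn
      have hA2 : (a-2*c)*(b-2) ≤ (a-2*c₀)*(b-2*c₀) :=
        mul_le_mul (by linarith) (by linarith) (by linarith) (by linarith)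
      have hA3 : ((K:ℝ)^2*(1-c))*((a-2*c)*(b-2)) ≤ ((K:ℝ)^2*(1-c))*((a-2*c₀)*(b-2*c₀)) :=
        mul_le_mul_of_nonneg_left hA2 (mul_nonneg (by positivity) (by linarith))
      have hA5 := mul_le_mul_of_nonneg_left (hA1.trans hA3)
        (show (0:ℝ) ≤ 2*ηH by positivity)
      have hA6 := mul_le_mul_of_nonneg_left hcond'.le
        (show (0:ℝ) ≤ 2*(1-c) by linarith)
      linarith [hA5, hA6]
    · push_neg at hcase
      have hnn : (0:ℝ) ≤ (a-2*c)*(b-2) := mul_nonneg (by linarith) (by linarith)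
      have hB1 : (1-d)*((a-2*c)*(b-2)) ≤ 2*((a-2*c)*(b-2)) :=
        mul_le_mul_of_nonneg_right (by linarith) hnn
      have hB2 : 2*((a-2*c)*(b-2)) ≤ ((K:ℝ)^2*(1-c₀))*((a-2*c)*(b-2)) :=
        mul_le_mul_of_nonneg_right hJordan hnn
      have hB3 : (1-c₀)*(a-2*c) ≤ (1-c)*(a-2*c₀) := by
        nlinarith [mul_nonneg (show (0:ℝ) ≤ a-2 by linarith)
          (show (0:ℝ) ≤ c₀ - c by linarith)]
      have hB5 : (1-c₀)*(a-2*c) * (b-2) ≤ (1-c)*(a-2*c₀) * (b-2*c₀) :=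
        mul_le_mul hB3 (by linarith) (by linarith)
          (mul_nonneg (by linarith) (by linarith))
      have hB6 := mul_le_mul_of_nonneg_left hB5
        (show (0:ℝ) ≤ 2*ηH*(K:ℝ)^2 by positivity)
      have hB7 := mul_le_mul_of_nonneg_left (hB1.trans hB2)
        (show (0:ℝ) ≤ 2*ηH by positivity)
      have hB8 := mul_le_mul_of_nonneg_left hcond'.le
        (show (0:ℝ) ≤ 2*(1-c) by linarith)
      linarith [hB6, hB7, hB8]
  -- conclusion
  have h2π : (0:ℝ) < 2 * π := by positivity
  have hmem : F 0 ∈ F '' Set.Ico (0:ℝ) (2*π) := ⟨0, ⟨le_refl 0, h2π⟩, rfl⟩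
  have hub : ∀ x ∈ F '' Set.Ico (0:ℝ) (2*π), x ≤ F 0 := by
    rintro x ⟨ω, _, rfl⟩; exact key ω
  have hsup : sSup (F '' Set.Ico (0:ℝ) (2*π)) = F 0 :=
    le_antisymm (csSup_le ⟨F 0, hmem⟩ hub) (le_csSup ⟨F 0, hub⟩ hmem)
  exact ⟨hsup.trans hF0, hF0⟩
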